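/- Let n be a positive integer and s : List (Fin n) a stream with s.length < n. Define f : Fin n → ℤ by f(i) = (number of occurrences of i in s) − 1. Then: (a) ∑_{i} f(i) = s.length − n; (b) for every i : Fin n, f(i) < 0 if and only if i is missing from s; and (c) 2 · ∑_{i : f(i) < 0} |f(i)| ≥ ∑_{i} |f(i)|. -/

import Mathlib

lemma sum_count_univ {n : ℕ} (s : List (Fin n)) :
    ∑ i : Fin n, s.count i = s.length := by
  classical
  have h : ∑ i : Fin n, (s : Multiset (Fin n)).count i = Multiset.card (s : Multiset (Fin n)) := by
    rw [← Multiset.toFinset_sum_count_eq (s : Multiset (Fin n))]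
    exact (Finset.sum_subset (Finset.subset_univ _) (by
      intro x _ hx
      have hx' : x ∉ s := by simpa [Multiset.mem_toFinset] using hx
      simp [Multiset.count_eq_zero, hx'])).symm
  simpa using h

/-- For a stream `s` over `Fin n` of length `< n`, with frequency vector
`f i = count of i in s − 1`: the total sum of `f` is `s.length − n`, the
negative coordinates are exactly the missing items, and the absolute mass on
negative coordinates is at least half the total absolute mass. -/
theorem stmt_1 (n : ℕ) (hn : 0 < n) (s : List (Fin n)) (hlen : s.length < n)
    (f : Fin n → ℤ) (hf : ∀ i, f i = (s.count i : ℤ) - 1) :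
    (∑ i, f i = (s.length : ℤ) - (n : ℤ)) ∧
    (∀ i, f i < 0 ↔ i ∉ s) ∧
    2 * ∑ i ∈ Finset.univ.filter (fun i => f i < 0), |f i| ≥ ∑ i, |f i| := by
  classical
  have hsum : ∑ i, f i = (s.length : ℤ) - (n : ℤ) := by
    have := sum_count_univ s
    calc ∑ i, f i = ∑ i : Fin n, ((s.count i : ℤ) - 1) := by
          exact Finset.sum_congr rfl fun i _ => hf i
      _ = (∑ i : Fin n, (s.count i : ℤ)) - n := by
          rw [Finset.sum_sub_distrib]; simp
      _ = (s.length : ℤ) - n := by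
          rw [← Nat.cast_sum, this]
  have hneg : ∀ i, f i < 0 ↔ i ∉ s := by
    intro i
    rw [hf i]
    constructor
    · intro h hmem
      have : 1 ≤ s.count i := List.count_pos_iff.mpr hmem
      have : (1 : ℤ) ≤ (s.count i : ℤ) := by exact_mod_cast this
      omega
    · intro h
      have : s.count i = 0 := List.count_eq_zero.mpr h
      simp [this]
  refine ⟨hsum, hneg, ?_⟩
  set A := Finset.univ.filter (fun i => f i < 0) with hA
  have hsplit : ∑ i, |f i| = ∑ i ∈ A, |f i| + ∑ i ∈ Finset.univ.filter (fun i => ¬ f i < 0), |f i| :=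
    (Finset.sum_filter_add_sum_filter_not _ _ _).symm
  -- on A, f i = -1
  have hAval : ∀ i ∈ A, f i = -1 := by
    intro i hi
    have hi' : f i < 0 := (Finset.mem_filter.mp hi).2
    have : s.count i = 0 := List.count_eq_zero.mpr ((hneg i).mp hi')
    rw [hf i, this]; simp
  have hAabs : ∑ i ∈ A, |f i| = A.card := by
    rw [Finset.sum_congr rfl (fun i hi => show |f i| = 1 by rw [hAval i hi]; norm_num)]
    simp
  have hBabs : ∑ i ∈ Finset.univ.filter (fun i => ¬ f i < 0), |f i|
      = ∑ i ∈ Finset.univ.filter (fun i => ¬ f i < 0), f i := by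
    refine Finset.sum_congr rfl fun i hi => ?_
    have : ¬ f i < 0 := (Finset.mem_filter.mp hi).2
    exact abs_of_nonneg (by omega)
  have hBsum : ∑ i ∈ Finset.univ.filter (fun i => ¬ f i < 0), f i
      = (∑ i, f i) - ∑ i ∈ A, f i := by
    rw [← Finset.sum_filter_add_sum_filter_not Finset.univ (fun i => f i < 0) f]; ring
  have hAsum : ∑ i ∈ A, f i = -(A.card : ℤ) := by
    rw [Finset.sum_congr rfl hAval]; simp
  have : ∑ i, |f i| = (A.card : ℤ) + ((s.length : ℤ) - n + A.card) := by
    rw [hsplit, hAabs, hBabs, hBsum, hsum, hAsum]; ring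
  rw [this, hAabs]
  have : (s.length : ℤ) < n := by exact_mod_cast hlen
  omega
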